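/- A unit-speed rectifying curve α with positive curvature can be written as α(s) = (1/a)·√(1 + (as + b)²) · y(c + arctan(as + b)), where a > 0, b, c are constants and y is a unit-speed curve on the unit sphere centered at the origin; in particular every rectifying curve lies on a cone with vertex at the origin. -/

import Mathlib

open Real Set
open scoped RealInnerProductSpace

noncomputable section

/-- Euclidean 3-space. -/
abbrev E3 := EuclideanSpace ℝ (Fin 3)

/-- Constructor for points of `E3`. -/
def e3 (x y z : ℝ) : E3 := (WithLp.equiv 2 (Fin 3 → ℝ)).symm ![x, y, z]

/-- The cross product on `E3`. -/
def cross3 (a b : E3) : E3 :=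
  e3 (a 1 * b 2 - a 2 * b 1) (a 2 * b 0 - a 0 * b 2) (a 0 * b 1 - a 1 * b 0)

lemma inner3 (x y : E3) : ⟪x,y⟫ = x 0 * y 0 + x 1 * y 1 + x 2 * y 2 := by
  simp [PiLp.inner_apply, Fin.sum_univ_three, RCLike.inner_apply, mul_comm]

lemma cross3_app0 (a b : E3) : cross3 a b 0 = a 1 * b 2 - a 2 * b 1 := rfl
lemma cross3_app1 (a b : E3) : cross3 a b 1 = a 2 * b 0 - a 0 * b 2 := rfl
lemma cross3_app2 (a b : E3) : cross3 a b 2 = a 0 * b 1 - a 1 * b 0 := rfl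

lemma inner_cross_left (t n : E3) : ⟪t, cross3 t n⟫ = 0 := by
  simp only [inner3, cross3_app0, cross3_app1, cross3_app2]; ring

lemma inner_cross_right (t n : E3) : ⟪n, cross3 t n⟫ = 0 := by
  simp only [inner3, cross3_app0, cross3_app1, cross3_app2]; ring

lemma inner_cross_self (t n : E3) (e1 : ⟪t,t⟫ = 1) (e2 : ⟪n,n⟫ = 1) (e3 : ⟪t,n⟫ = 0) :
    ⟪cross3 t n, cross3 t n⟫ = 1 := by
  simp only [inner3, cross3_app0, cross3_app1, cross3_app2] at *
  nlinarith [e1, e2, e3]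

lemma cramer0 (t0 t1 t2 n0 n1 n2 v0 v1 v2 : ℝ) (e1 : t0*t0+t1*t1+t2*t2 = 1)
    (e2 : n0*n0+n1*n1+n2*n2 = 1) (e3 : t0*n0+t1*n1+t2*n2 = 0) :
    v0 = (v0*t0+v1*t1+v2*t2)*t0 + (v0*n0+v1*n1+v2*n2)*n0 +
      (v0*(t1*n2-t2*n1)+v1*(t2*n0-t0*n2)+v2*(t0*n1-t1*n0))*(t1*n2-t2*n1) := by
  linear_combination (-v0*(n0*n0+n1*n1+n2*n2) + (v0*n0+v1*n1+v2*n2)*n0) * e1 +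
    (-v0 + (v0*t0+v1*t1+v2*t2)*t0) * e2 +
    (v0*(t0*n0+t1*n1+t2*n2) - (v0*t0+v1*t1+v2*t2)*n0 - (v0*n0+v1*n1+v2*n2)*t0) * e3

lemma cramer1 (t0 t1 t2 n0 n1 n2 v0 v1 v2 : ℝ) (e1 : t0*t0+t1*t1+t2*t2 = 1)
    (e2 : n0*n0+n1*n1+n2*n2 = 1) (e3 : t0*n0+t1*n1+t2*n2 = 0) :
    v1 = (v0*t0+v1*t1+v2*t2)*t1 + (v0*n0+v1*n1+v2*n2)*n1 +
      (v0*(t1*n2-t2*n1)+v1*(t2*n0-t0*n2)+v2*(t0*n1-t1*n0))*(t2*n0-t0*n2) := by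
  linear_combination (-v1*(n0*n0+n1*n1+n2*n2) + (v0*n0+v1*n1+v2*n2)*n1) * e1 +
    (-v1 + (v0*t0+v1*t1+v2*t2)*t1) * e2 +
    (v1*(t0*n0+t1*n1+t2*n2) - (v0*t0+v1*t1+v2*t2)*n1 - (v0*n0+v1*n1+v2*n2)*t1) * e3

lemma cramer2 (t0 t1 t2 n0 n1 n2 v0 v1 v2 : ℝ) (e1 : t0*t0+t1*t1+t2*t2 = 1)
    (e2 : n0*n0+n1*n1+n2*n2 = 1) (e3 : t0*n0+t1*n1+t2*n2 = 0) :
    v2 = (v0*t0+v1*t1+v2*t2)*t2 + (v0*n0+v1*n1+v2*n2)*n2 +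
      (v0*(t1*n2-t2*n1)+v1*(t2*n0-t0*n2)+v2*(t0*n1-t1*n0))*(t0*n1-t1*n0) := by
  linear_combination (-v2*(n0*n0+n1*n1+n2*n2) + (v0*n0+v1*n1+v2*n2)*n2) * e1 +
    (-v2 + (v0*t0+v1*t1+v2*t2)*t2) * e2 +
    (v2*(t0*n0+t1*n1+t2*n2) - (v0*t0+v1*t1+v2*t2)*n2 - (v0*n0+v1*n1+v2*n2)*t2) * e3

lemma expand3 (t n v : E3) (e1 : ⟪t,t⟫ = 1) (e2 : ⟪n,n⟫ = 1) (e3 : ⟪t,n⟫ = 0) :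
    v = ⟪v,t⟫ • t + ⟪v,n⟫ • n + ⟪v, cross3 t n⟫ • cross3 t n := by
  simp only [inner3, cross3_app0, cross3_app1, cross3_app2] at *
  ext i
  fin_cases i <;>
    simp only [PiLp.add_apply, PiLp.smul_apply, smul_eq_mul]
  · exact cramer0 (t 0) (t 1) (t 2) (n 0) (n 1) (n 2) (v 0) (v 1) (v 2) e1 e2 e3
  · exact cramer1 (t 0) (t 1) (t 2) (n 0) (n 1) (n 2) (v 0) (v 1) (v 2) e1 e2 e3
  · exact cramer2 (t 0) (t 1) (t 2) (n 0) (n 1) (n 2) (v 0) (v 1) (v 2) e1 e2 e3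

lemma norm_smul_add_smul (p q : ℝ) (t b : E3) (h1 : ⟪t,t⟫ = 1) (h2 : ⟪b,b⟫ = 1)
    (h3 : ⟪t,b⟫ = 0) : ‖p • t + q • b‖ = Real.sqrt (p^2 + q^2) := by
  have h3' : ⟪b,t⟫ = 0 := by rw [real_inner_comm]; exact h3
  rw [norm_eq_sqrt_real_inner]
  congr 1
  simp only [inner_add_left, inner_add_right, real_inner_smul_left, real_inner_smul_right,
    h1, h2, h3, h3']
  ring

set_option maxHeartbeats 1000000 in
/-- A unit-speed rectifying curve with positive curvature can be written as
`α(s) = (1/a)√(1+(as+b)²) • y(c + arctan(as+b))` with `y` a unit-speed curve on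
the unit sphere; in particular `α` lies on a cone with vertex at the origin. -/
theorem rectifying_cone_parametrization (I : Set ℝ) (hIo : IsOpen I) (hIc : Convex ℝ I)
    (α T N B : ℝ → E3) (κ τ : ℝ → ℝ)
    (hα : ∀ s ∈ I, HasDerivAt α (T s) s)
    (hT : ∀ s ∈ I, HasDerivAt T (κ s • N s) s)
    (hN : ∀ s ∈ I, HasDerivAt N ((-κ s) • T s + τ s • B s) s)
    (hB : ∀ s ∈ I, HasDerivAt B ((-τ s) • N s) s)
    (hTu : ∀ s ∈ I, ‖T s‖ = 1)
    (hNu : ∀ s ∈ I, ‖N s‖ = 1)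
    (hBdef : ∀ s ∈ I, B s = cross3 (T s) (N s))
    (hκ : ∀ s ∈ I, 0 < κ s)
    (hrect : ∀ s ∈ I, ⟪α s, N s⟫ = 0) :
    ∃ a b c : ℝ, ∃ y : ℝ → E3, 0 < a ∧
      ∀ s ∈ I,
        ‖y (c + Real.arctan (a * s + b))‖ = 1 ∧
        HasDerivAt y (deriv y (c + Real.arctan (a * s + b))) (c + Real.arctan (a * s + b)) ∧
        ‖deriv y (c + Real.arctan (a * s + b))‖ = 1 ∧
        ‖α s‖ = (1 / a) * Real.sqrt (1 + (a * s + b) ^ 2) ∧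
        α s = ((1 / a) * Real.sqrt (1 + (a * s + b) ^ 2)) • y (c + Real.arctan (a * s + b)) := by
  rcases Set.eq_empty_or_nonempty I with hI | ⟨s₀, hs₀⟩
  · exact ⟨1, 0, 0, fun _ => 0, one_pos, by simp [hI]⟩
  have hTT : ∀ s ∈ I, ⟪T s, T s⟫ = 1 := fun s hs => by
    rw [real_inner_self_eq_norm_sq, hTu s hs]; norm_num
  have hNN : ∀ s ∈ I, ⟪N s, N s⟫ = 1 := fun s hs => by
    rw [real_inner_self_eq_norm_sq, hNu s hs]; norm_num
  have hTN : ∀ s ∈ I, ⟪T s, N s⟫ = 0 := by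
    intro s hs
    have hd := (hT s hs).inner ℝ (hT s hs)
    have he : (fun u => ⟪T u, T u⟫) =ᶠ[nhds s] (fun _ => (1:ℝ)) := by
      filter_upwards [hIo.mem_nhds hs] with u hu
      exact hTT u hu
    have h0 := (hd.congr_of_eventuallyEq he.symm).unique (hasDerivAt_const s 1)
    rw [real_inner_smul_right, real_inner_smul_left] at h0
    have hcomm : (⟪T s, N s⟫ : ℝ) = ⟪N s, T s⟫ := real_inner_comm _ _
    rw [hcomm] at h0
    have h1 : κ s * ⟪N s, T s⟫ = 0 := by linarith
    rw [real_inner_comm]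
    exact (mul_eq_zero.mp h1).resolve_left (hκ s hs).ne'
  have hTB : ∀ s ∈ I, ⟪T s, B s⟫ = 0 := fun s hs => by
    rw [hBdef s hs]; exact inner_cross_left _ _
  have hBB : ∀ s ∈ I, ⟪B s, B s⟫ = 1 := fun s hs => by
    rw [hBdef s hs]; exact inner_cross_self _ _ (hTT s hs) (hNN s hs) (hTN s hs)
  -- derivative of ⟪α, T⟫ is 1
  have hlamd : ∀ s ∈ I, HasDerivAt (fun u => ⟪α u, T u⟫) 1 s := by
    intro s hs
    have hd := (hα s hs).inner ℝ (hT s hs)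
    have hval : (⟪α s, κ s • N s⟫ + ⟪T s, T s⟫ : ℝ) = 1 := by
      rw [real_inner_smul_right, hrect s hs, hTT s hs]; ring
    rwa [hval] at hd
  -- derivative of ⟪α, B⟫ is 0
  have hmud : ∀ s ∈ I, HasDerivAt (fun u => ⟪α u, B u⟫) 0 s := by
    intro s hs
    have hd := (hα s hs).inner ℝ (hB s hs)
    have hval : (⟪α s, (-τ s) • N s⟫ + ⟪T s, B s⟫ : ℝ) = 0 := by
      rw [real_inner_smul_right, hrect s hs, hTB s hs]; ring
    rwa [hval] at hd
  -- κ λ = τ μ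
  have hκτ : ∀ s ∈ I, κ s * ⟪α s, T s⟫ = τ s * ⟪α s, B s⟫ := by
    intro s hs
    have hd := (hα s hs).inner ℝ (hN s hs)
    have he : (fun u => ⟪α u, N u⟫) =ᶠ[nhds s] (fun _ => (0:ℝ)) := by
      filter_upwards [hIo.mem_nhds hs] with u hu
      exact hrect u hu
    have h0 := (hd.congr_of_eventuallyEq he.symm).unique (hasDerivAt_const s 0)
    rw [inner_add_right, real_inner_smul_right, real_inner_smul_right, hTN s hs] at h0
    linarith
  -- constancy helper
  have hconst : ∀ f : ℝ → ℝ, (∀ s ∈ I, HasDerivAt f 0 s) → ∀ s ∈ I, f s = f s₀ := by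
    intro f hf s hs
    refine hIc.is_const_of_fderivWithin_eq_zero
      (fun x hx => ((hf x hx).differentiableAt).differentiableWithinAt) ?_ hs hs₀
    intro x hx
    rw [fderivWithin_of_isOpen hIo hx, ((hf x hx).hasFDerivAt).fderiv]
    ext z; simp
  set m := (⟪α s₀, B s₀⟫ : ℝ) with hmdef
  set CC := (⟪α s₀, T s₀⟫ : ℝ) - s₀ with hCCdef
  have hmuc : ∀ s ∈ I, ⟪α s, B s⟫ = m := hconst _ hmud
  have hlamc : ∀ s ∈ I, ⟪α s, T s⟫ = s + CC := by
    have h := hconst (fun u => ⟪α u, T u⟫ - u)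
      (fun s hs => by
        have h' := (hlamd s hs).sub (hasDerivAt_id' s); rw [sub_self] at h'; exact h')
    intro s hs
    have := h s hs
    linarith
  have hm : m ≠ 0 := by
    intro hm0
    have hl0 : ∀ s ∈ I, ⟪α s, T s⟫ = 0 := by
      intro s hs
      have h1 := hκτ s hs
      rw [hmuc s hs, hm0, mul_zero] at h1
      exact (mul_eq_zero.mp h1).resolve_left (hκ s hs).ne'
    have he : (fun u => ⟪α u, T u⟫) =ᶠ[nhds s₀] (fun _ => (0:ℝ)) := by
      filter_upwards [hIo.mem_nhds hs₀] with u hu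
      exact hl0 u hu
    have := ((hlamd s₀ hs₀).congr_of_eventuallyEq he.symm).unique (hasDerivAt_const s₀ 0)
    norm_num at this
  have habs : (0:ℝ) < |m| := abs_pos.mpr hm
  refine ⟨|m|⁻¹, |m|⁻¹ * CC, 0,
    fun t => (|m|⁻¹ * Real.cos t) • α ((Real.tan t - |m|⁻¹ * CC) * |m|),
    by positivity, ?_⟩
  intro s hs
  simp only [zero_add]
  set X := |m|⁻¹ * s + |m|⁻¹ * CC with hXdef
  set θ := Real.arctan X with hθdef
  have hcosθ : Real.cos θ = 1 / Real.sqrt (1 + X^2) := Real.cos_arctan X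
  have hcospos : 0 < Real.cos θ := Real.cos_arctan_pos X
  have hsq : (0:ℝ) < 1 + X^2 := by positivity
  have hsqrtpos : 0 < Real.sqrt (1 + X^2) := Real.sqrt_pos.mpr hsq
  have htanθ : Real.tan θ = X := Real.tan_arctan X
  have hgθ : (Real.tan θ - |m|⁻¹ * CC) * |m| = s := by
    rw [htanθ, hXdef]; field_simp; ring
  have hlam_s : (⟪α s, T s⟫ : ℝ) = s + CC := hlamc s hs
  have hmu_s : (⟪α s, B s⟫ : ℝ) = m := hmuc s hs
  have hαexp : α s = (s + CC) • T s + m • B s := by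
    have h := expand3 (T s) (N s) (α s) (hTT s hs) (hNN s hs) (hTN s hs)
    rw [← hBdef s hs, hrect s hs, hlam_s, hmu_s, zero_smul, add_zero] at h
    exact h
  have hsCC : s + CC = |m| * X := by rw [hXdef]; field_simp
  have hαnorm : ‖α s‖ = Real.sqrt ((s + CC)^2 + m^2) := by
    rw [hαexp]
    exact norm_smul_add_smul _ _ _ _ (hTT s hs) (hBB s hs) (hTB s hs)
  have hnormkey : ‖α s‖ = 1 / |m|⁻¹ * Real.sqrt (1 + X^2) := by
    rw [hαnorm, one_div, inv_inv]
    rw [show |m| = Real.sqrt (m^2) by rw [Real.sqrt_sq_eq_abs],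
      ← Real.sqrt_mul (sq_nonneg m)]
    congr 1
    have h2 : (s + CC)^2 = m^2 * X^2 := by
      rw [hsCC, mul_pow, sq_abs]
    rw [h2]; ring
  -- y at the point
  have hyval : (fun t => (|m|⁻¹ * Real.cos t) • α ((Real.tan t - |m|⁻¹ * CC) * |m|)) θ
      = (|m|⁻¹ * Real.cos θ) • α s := by
    simp only [hgθ]
  have hynorm : ‖(|m|⁻¹ * Real.cos θ) • α s‖ = 1 := by
    rw [norm_smul, hnormkey, hcosθ]
    rw [Real.norm_eq_abs, abs_of_pos (by positivity)]
    field_simp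
  -- derivative of y
  have hcos_ne : Real.cos θ ≠ 0 := hcospos.ne'
  have hgd : HasDerivAt (fun t => (Real.tan t - |m|⁻¹ * CC) * |m|)
      (1 / Real.cos θ ^ 2 * |m|) θ :=
    ((Real.hasDerivAt_tan hcos_ne).sub_const _).mul_const _
  have hcompd : HasDerivAt (fun t => α ((Real.tan t - |m|⁻¹ * CC) * |m|))
      ((1 / Real.cos θ ^ 2 * |m|) • T s) θ :=
    HasDerivAt.scomp_of_eq θ (hα s hs) hgd hgθ.symm
  have hcoefd : HasDerivAt (fun t => |m|⁻¹ * Real.cos t) (|m|⁻¹ * (-Real.sin θ)) θ :=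
    (Real.hasDerivAt_cos θ).const_mul _
  have hyd : HasDerivAt (fun t => (|m|⁻¹ * Real.cos t) • α ((Real.tan t - |m|⁻¹ * CC) * |m|))
      ((|m|⁻¹ * Real.cos θ) • ((1 / Real.cos θ ^ 2 * |m|) • T s)
        + (|m|⁻¹ * (-Real.sin θ)) • α ((Real.tan θ - |m|⁻¹ * CC) * |m|)) θ :=
    hcoefd.smul hcompd
  rw [hgθ] at hyd
  have hveq : (|m|⁻¹ * Real.cos θ) • ((1 / Real.cos θ ^ 2 * |m|) • T s)
        + (|m|⁻¹ * (-Real.sin θ)) • α s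
      = Real.cos θ • T s + (-(m * |m|⁻¹ * Real.sin θ)) • B s := by
    have hX_tan : X = Real.sin θ / Real.cos θ := by
      rw [← htanθ, Real.tan_eq_sin_div_cos]
    have hpy : Real.sin θ ^ 2 + Real.cos θ ^ 2 = 1 := Real.sin_sq_add_cos_sq θ
    have hms : |m|⁻¹ * |m| = 1 := inv_mul_cancel₀ habs.ne'
    have hmne : |m| ≠ 0 := habs.ne'
    rw [hαexp, hsCC, hX_tan]
    match_scalars
    · field_simp
      linear_combination (-1) * hpy
    · ring
  rw [hveq] at hyd
  have hamsq : (-(m * |m|⁻¹ * Real.sin θ))^2 = Real.sin θ ^ 2 := by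
    have h2 : (m * |m|⁻¹)^2 = 1 := by
      rw [mul_pow, ← sq_abs m]
      field_simp
    linear_combination (Real.sin θ ^ 2) * h2
  have hvnorm : ‖Real.cos θ • T s + (-(m * |m|⁻¹ * Real.sin θ)) • B s‖ = 1 := by
    rw [norm_smul_add_smul _ _ _ _ (hTT s hs) (hBB s hs) (hTB s hs), hamsq]
    rw [show Real.cos θ ^2 + Real.sin θ ^2 = 1 by nlinarith [Real.sin_sq_add_cos_sq θ]]
    exact Real.sqrt_one
  have hderiv : deriv (fun t => (|m|⁻¹ * Real.cos t) • α ((Real.tan t - |m|⁻¹ * CC) * |m|)) θ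
      = Real.cos θ • T s + (-(m * |m|⁻¹ * Real.sin θ)) • B s := hyd.deriv
  refine ⟨?_, ?_, ?_, ?_, ?_⟩
  · rw [hgθ]; exact hynorm
  · rw [hderiv]; exact hyd
  · rw [hderiv]; exact hvnorm
  · exact hnormkey
  · rw [hgθ, smul_smul]
    have hc : 1 / |m|⁻¹ * Real.sqrt (1 + X^2) * (|m|⁻¹ * Real.cos θ) = 1 := by
      rw [hcosθ]; field_simp
    rw [hc, one_smul]
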